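/- If P is a nonempty family of subsets of X closed under finite intersections and P ⊆ P_seq, then the Q_P-topology on X/P is regular (T3). -/

import Mathlib

open Set Topology

/-- The equivalence relation identifying points lying in exactly the same members of `P`. -/
def pSetoid {X : Type*} (P : Set (Set X)) : Setoid X where
  r x y := ∀ V ∈ P, x ∈ V ↔ y ∈ V
  iseqv := ⟨fun _ _ _ => Iff.rfl, fun h V hV => (h V hV).symm,
    fun h1 h2 V hV => (h1 V hV).trans (h2 V hV)⟩

/-- The quotient `X/P`. -/
def pQuot {X : Type*} (P : Set (Set X)) : Type _ := Quotient (pSetoid P)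

/-- The `Q_P`-map `q : X → X/P`. -/
def pMap {X : Type*} (P : Set (Set X)) : X → pQuot P := Quotient.mk (pSetoid P)

/-- The `Q_P`-topology on `X/P`, generated by the images `q[V]`, `V ∈ P`. -/
def pTop {X : Type*} (P : Set (Set X)) : TopologicalSpace (pQuot P) :=
  TopologicalSpace.generateFrom {S | ∃ V ∈ P, S = pMap P '' V}

/-- `R_seq`: sets `W` that are unions `⋃ₙ Uₙ` with `Uₖ ⊆ X \ Vₖ ⊆ Uₖ₊₁`, `Uₙ, Vₙ ∈ R`. -/
def seqFam {X : Type*} (R : Set (Set X)) : Set (Set X) :=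
  {W | ∃ U V : ℕ → Set X, (∀ n, U n ∈ R) ∧ (∀ n, V n ∈ R) ∧
    (∀ k, U k ⊆ (V k)ᶜ ∧ (V k)ᶜ ⊆ U (k + 1)) ∧ (⋃ n, U n) = W}

/-- The family of cozero sets of `X`. -/
def cozeroFam (X : Type*) [TopologicalSpace X] : Set (Set X) :=
  {W | ∃ f : X → ℝ, Continuous f ∧ (∀ x, f x ∈ Set.Icc (0 : ℝ) 1) ∧ W = f ⁻¹' Set.Ioc 0 1}

/-- A skeletal map: a continuous surjection such that the closure of the image of every
nonempty open set has nonempty interior. -/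
def IsSkeletal {X Y : Type*} [TopologicalSpace X] [TopologicalSpace Y] (f : X → Y) : Prop :=
  Continuous f ∧ Function.Surjective f ∧
    ∀ U : Set X, IsOpen U → U.Nonempty → (interior (closure (f '' U))).Nonempty

/-- A skeletal family of open subsets of `X`. -/
def SkeletalFamily {X : Type*} [TopologicalSpace X] (P : Set (Set X)) : Prop :=
  ∀ V : Set X, IsOpen V → V.Nonempty →
    ∃ W ∈ P, ∀ U ∈ P, U ⊆ W → U.Nonempty → (U ∩ V).Nonempty

/-- A π-base: a family of nonempty open sets such that every nonempty open set contains
a member of the family. -/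
def IsPiBase {Y : Type*} [TopologicalSpace Y] (B : Set (Set Y)) : Prop :=
  (∀ b ∈ B, IsOpen b ∧ b.Nonempty) ∧ ∀ U : Set Y, IsOpen U → U.Nonempty → ∃ b ∈ B, b ⊆ U

/-- A strategy for Player I in the open-open game produces nonempty open sets. -/
def ValidStrategy {X : Type*} [TopologicalSpace X] (σ : List (Set X) → Set X) : Prop :=
  ∀ l : List (Set X), IsOpen (σ l) ∧ (σ l).Nonempty

/-- `B` is a play of Player II against the strategy `σ` of Player I: each `B n` is a
nonempty open subset of the set produced by `σ` from the previous moves of Player II. -/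
def IsPlayAgainst {X : Type*} [TopologicalSpace X] (σ : List (Set X) → Set X)
    (B : ℕ → Set X) : Prop :=
  ∀ n, IsOpen (B n) ∧ (B n).Nonempty ∧ B n ⊆ σ (List.ofFn (fun i : Fin n => B i))

/-- A winning strategy for Player I in the open-open game: every play of Player II against
it has dense union. -/
def WinningStrategy {X : Type*} [TopologicalSpace X] (σ : List (Set X) → Set X) : Prop :=
  ValidStrategy σ ∧ ∀ B : ℕ → Set X, IsPlayAgainst σ B → Dense (⋃ n, B n)

/-- A space is I-favorable if Player I has a winning strategy in the open-open game. -/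
def IFavorable (X : Type*) [TopologicalSpace X] : Prop :=
  ∃ σ : List (Set X) → Set X, WinningStrategy σ

/-- `P` is closed under the strategy `σ`. -/
def ClosedUnderStrategy {X : Type*} [TopologicalSpace X] (P : Set (Set X))
    (σ : List (Set X) → Set X) : Prop :=
  σ [] ∈ P ∧ ∀ l : List (Set X), (∀ b ∈ l, b ∈ P) → σ l ∈ P

/-- The limit of an inverse system, as the subspace of threads in the product. -/
abbrev invLimit {ι : Type*} [Preorder ι] (Y : ι → Type*)
    (bond : ∀ i j : ι, i ≤ j → Y j → Y i) : Type _ :=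
  {u : ∀ i, Y i // ∀ (i j : ι) (h : i ≤ j), bond i j h (u j) = u i}

/-- The topology of the inverse limit, with explicitly given topologies on factors. -/
def invLimitTop {ι : Type*} [Preorder ι] (Y : ι → Type*) (t : ∀ i, TopologicalSpace (Y i))
    (bond : ∀ i j : ι, i ≤ j → Y j → Y i) : TopologicalSpace (invLimit Y bond) :=
  @instTopologicalSpaceSubtype _ _ (@Pi.topologicalSpace ι Y t)

/-- σ-completeness of an inverse system: each countable chain of indices has a least upper
bound `l`, and the canonical map from `Y l` to the limit of the countable subsystem is a
homeomorphism (an embedding whose range is the set of threads). -/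
def SigmaComplete {ι : Type*} [Preorder ι] (Y : ι → Type*) (t : ∀ i, TopologicalSpace (Y i))
    (bond : ∀ i j : ι, i ≤ j → Y j → Y i) : Prop :=
  (∀ s : ℕ → ι, Monotone s → ∃ l, IsLUB (Set.range s) l) ∧
  ∀ (s : ℕ → ι) (hs : Monotone s) (l : ι) (hl : IsLUB (Set.range s) l),
    @IsEmbedding (Y l) (∀ n, Y (s n)) (t l) (@Pi.topologicalSpace ℕ _ (fun n => t (s n)))
      (fun x n => bond (s n) l (hl.1 (Set.mem_range_self n)) x) ∧
    Set.range (fun (x : Y l) (n : ℕ) => bond (s n) l (hl.1 (Set.mem_range_self n)) x) =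
      {u : ∀ n, Y (s n) | ∀ (n m : ℕ) (h : n ≤ m), bond (s n) (s m) (hs h) (u m) = u n}

/-- A σ-complete inverse system of topological spaces over a directed partial order,
with continuous surjective bonding maps. -/
structure TopInvSystem : Type 1 where
  ι : Type
  [ord : PartialOrder ι]
  directed : IsDirected ι (· ≤ ·)
  Y : ι → Type
  [t : ∀ i, TopologicalSpace (Y i)]
  bond : ∀ i j : ι, i ≤ j → Y j → Y i
  bond_refl : ∀ i (x : Y i), bond i i le_rfl x = x
  bond_comp : ∀ (i j k : ι) (hij : i ≤ j) (hjk : j ≤ k) (x : Y k),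
    bond i j hij (bond j k hjk x) = bond i k (hij.trans hjk) x
  bond_cont : ∀ (i j : ι) (h : i ≤ j), Continuous (bond i j h)
  bond_surj : ∀ (i j : ι) (h : i ≤ j), Function.Surjective (bond i j h)
  sigmaComplete : SigmaComplete Y t bond

instance (S : TopInvSystem) : PartialOrder S.ι := S.ord
instance (S : TopInvSystem) (i : S.ι) : TopologicalSpace (S.Y i) := S.t i

/-- The limit of a `TopInvSystem`. -/
def TopInvSystem.Limit (S : TopInvSystem) : Type := invLimit S.Y S.bond

instance (S : TopInvSystem) : TopologicalSpace S.Limit :=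
  inferInstanceAs (TopologicalSpace (invLimit S.Y S.bond))

/-- The bonding map `X/R → X/P` for `P ⊆ R`, sending `[x]_R` to `[x]_P`. -/
def pBond {X : Type*} (P R : Set (Set X)) (h : P ⊆ R) : pQuot R → pQuot P :=
  Quotient.lift (pMap P) (fun _ _ hab => Quotient.sound (fun V hV => hab V (h hV)))

/-- A `T`-club on a space `X` (with `T` the cozero sets): a collection of countable
subfamilies of `T`, each closed under a fixed winning strategy for Player I, closed under
finite unions and intersections, contained in its `seq`-family, which is cofinal among
countable subfamilies of `T` and closed under countable chains. -/
def TClub {X : Type*} [TopologicalSpace X] (C : Set (Set (Set X))) : Prop :=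
  ∃ σ : List (Set X) → Set X, WinningStrategy σ ∧
    (∀ P ∈ C, P.Countable ∧ P ⊆ cozeroFam X ∧ ClosedUnderStrategy P σ ∧
      (∀ A ∈ P, ∀ B ∈ P, A ∪ B ∈ P ∧ A ∩ B ∈ P) ∧ P ⊆ seqFam P) ∧
    (∀ Q : Set (Set X), Q.Countable → Q ⊆ cozeroFam X → ∃ P ∈ C, Q ⊆ P) ∧
    (∀ f : ℕ → Set (Set X), (∀ n, f n ∈ C) → Monotone f → (⋃ n, f n) ∈ C)

theorem stmt6 {X : Type*} (P : Set (Set X)) (hne : P.Nonempty)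
    (hinter : ∀ U ∈ P, ∀ V ∈ P, U ∩ V ∈ P) (hseq : P ⊆ seqFam P) :
    @T3Space (pQuot P) (pTop P) := by
  letI : TopologicalSpace (pQuot P) := pTop P
  have hmem : ∀ {V : Set X}, V ∈ P → ∀ x : X, Quotient.mk (pSetoid P) x ∈ pMap P '' V ↔ x ∈ V := by
    intro V hV x
    constructor
    · rintro ⟨y, hy, he⟩
      exact (Quotient.exact he V hV).mp hy
    · exact fun h => ⟨x, h, rfl⟩
  have hopen : ∀ {V : Set X}, V ∈ P → IsOpen (pMap P '' V) := fun {V} hV =>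
    TopologicalSpace.GenerateOpen.basic _ ⟨V, hV, rfl⟩
  have himage_inter : ∀ {U V : Set X}, U ∈ P → V ∈ P →
      pMap P '' (U ∩ V) = pMap P '' U ∩ pMap P '' V := by
    intro U V hU hV
    ext z
    induction z using Quotient.ind with
    | _ x =>
      exact (hmem (hinter U hU V hV) x).trans (Iff.trans (Set.mem_inter_iff _ _ _) (and_congr (hmem hU x) (hmem hV x))).symm
  -- the generators (plus univ) form a basis
  have hbasis : TopologicalSpace.IsTopologicalBasis
      (insert Set.univ {S | ∃ V ∈ P, S = pMap P '' V}) := by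
    refine TopologicalSpace.isTopologicalBasis_of_subbasis_of_inter rfl ?_
    rintro _ ⟨U, hU, rfl⟩ _ ⟨V, hV, rfl⟩
    exact ⟨U ∩ V, hinter U hU V hV, (himage_inter hU hV).symm⟩
  haveI hT0 : T0Space (pQuot P) := by
    refine t0Space_iff_inseparable _ |>.mpr ?_
    intro a b hab
    induction a using Quotient.ind with
    | _ x =>
    induction b using Quotient.ind with
    | _ y =>
      refine Quotient.sound fun V hV => ?_
      have := hab.mem_open_iff (hopen hV)
      replace this := (hmem hV x).symm.trans (this.trans (hmem hV y))
      exact this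
  haveI hreg : RegularSpace (pQuot P) := by
    refine RegularSpace.of_exists_mem_nhds_isClosed_subset ?_
    intro z s hs
    obtain ⟨o, hos, ho, hzo⟩ := mem_nhds_iff.mp hs
    obtain ⟨b, hb, hzb, hbo⟩ := hbasis.exists_subset_of_mem_open hzo ho
    rcases hb with rfl | ⟨W, hW, rfl⟩
    · exact ⟨Set.univ, Filter.univ_mem, isClosed_univ,
        (Set.univ_subset_iff.mpr (Set.eq_univ_of_univ_subset hbo)).trans hos⟩
    · -- z ∈ pMap P '' W  with W ∈ P
      induction z using Quotient.ind with
      | _ x =>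
        obtain ⟨U, V, hU, hV, hUV, hunion⟩ := hseq hW
        have hxW : x ∈ W := (hmem hW x).mp hzb
        rw [← hunion] at hxW
        obtain ⟨_, ⟨k, rfl⟩, hxk⟩ := hxW
        refine ⟨closure (pMap P '' U k), ?_, isClosed_closure, ?_⟩
        · exact Filter.mem_of_superset ((hopen (hU k)).mem_nhds ((hmem (hU k) x).mpr hxk))
            subset_closure
        · -- closure (q '' U k) ⊆ q '' U (k+1) ⊆ q '' W ⊆ s
          have hstep : closure (pMap P '' U k) ⊆ pMap P '' U (k + 1) := by
            intro w hw
            induction w using Quotient.ind with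
            | _ y =>
              by_contra hy
              replace hy := fun h => hy ((hmem (hU (k + 1)) y).mpr h)
              have hyV : y ∈ V k := by
                by_contra h
                exact hy ((hUV k).2 h)
              obtain ⟨u, huV, huU⟩ := mem_closure_iff.mp hw _ (hopen (hV k))
                ((hmem (hV k) y).mpr hyV)
              induction u using Quotient.ind with
              | _ a =>
                replace huV := (hmem (hV k) a).mp huV
                replace huU := (hmem (hU k) a).mp huU
                exact (hUV k).1 huU huV
          refine hstep.trans (Set.Subset.trans ?_ (hbo.trans hos))
          apply Set.image_mono
          rw [← hunion]
          exact Set.subset_iUnion U (k + 1)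
  exact ⟨⟩
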